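/- Let q = 2^m and let f be an o-polynomial over GF(q). Then for every nonzero y ∈ GF(q), the map x ↦ x·f(y·x^{q-2}) is a permutation of GF(q). -/

import Mathlib

/-- `f` is an o-polynomial over the finite field `F` of characteristic 2. -/
def IsOPoly {F : Type*} [Field F] [Fintype F] (f : F → F) : Prop :=
  Function.Bijective f ∧ f 0 = 0 ∧
    ∀ s : F, Function.Bijective fun x : F =>
      (f (x + s) + f s) * x ^ (Fintype.card F - 2)

/-- if f is an o-polynomial then x ↦ x·f(y·x^{q-2}) permutes GF(q) for y ≠ 0. -/
theorem stmt_2 {F : Type*} [Field F] [Fintype F]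
    (m : ℕ) (hcard : Fintype.card F = 2 ^ m)
    (f : F → F) (hf : IsOPoly f) :
    ∀ y : F, y ≠ 0 →
      Function.Bijective fun x : F => x * f (y * x ^ (Fintype.card F - 2)) := by
  obtain ⟨hbij, h0, hops⟩ := hf
  intro y hy
  by_cases hq : Fintype.card F = 2
  · -- q = 2 : exponent is 0
    have : (fun x : F => x * f (y * x ^ (Fintype.card F - 2)))
        = fun x : F => x * f y := by
      funext x; rw [hq]; simp
    rw [this]
    have hfy : f y ≠ 0 := by
      intro h
      exact hy (hbij.injective (h.trans h0.symm))
    exact (mulRight_bijective₀ _ hfy)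
  · -- q ≥ 3
    have hq3 : 3 ≤ Fintype.card F := by
      have h2 : 2 ≤ Fintype.card F := Fintype.one_lt_card
      omega
    have hpow : ∀ x : F, x ^ (Fintype.card F - 2) = x⁻¹ := by
      intro x
      by_cases hx : x = 0
      · subst hx
        rw [zero_pow (by omega), inv_zero]
      · have h1 : x ^ (Fintype.card F - 1) = 1 := FiniteField.pow_card_sub_one_eq_one x hx
        have : x ^ (Fintype.card F - 2) * x = x ^ (Fintype.card F - 1) := by
          rw [← pow_succ]
          congr 1
          omega
        field_simp
        rw [this, h1]
    -- h is the s = 0 bijection, simplified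
    have hh : Function.Bijective (fun x : F => f x * x⁻¹) := by
      have := hops 0
      have he : (fun x : F => (f (x + 0) + f 0) * x ^ (Fintype.card F - 2))
          = fun x : F => f x * x⁻¹ := by
        funext x; rw [add_zero, h0, add_zero, hpow]
      rwa [he] at this
    have key : (fun x : F => x * f (y * x ^ (Fintype.card F - 2)))
        = (fun z : F => y * z) ∘ (fun x : F => f x * x⁻¹) ∘ (fun x : F => y * x⁻¹) := by
      funext x
      simp only [Function.comp_apply, hpow]
      by_cases hx : x = 0
      · subst hx; simp [h0]
      · field_simp
    rw [key]
    exact ((mulLeft_bijective₀ y hy).comp hh).comp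
      ((mulLeft_bijective₀ y hy).comp (inv_involutive.bijective))
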